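/- arXiv:1701.08753 — 2 statements merged into one kernel-verified Lean document; each statement's English description precedes it below -/
import Mathlib

section
/- Almost monotonicity of the frequency function, real-variable form: let m ≥ 2 be an integer, C₀ > 0 and r₀ ∈ (0, 1]. Let D, H, E, G, F : (0, r₀] → ℝ be functions such that D and H are differentiable and strictly positive, D is nondecreasing, F is differentiable with F ≥ 0 and F' = H, and for every r ∈ (0, r₀]: (i) |D(r) − E(r)| ≤ C₀·F(r); (ii) |D'(r) − 2·G(r) − ((m−2)/r)·D(r)| ≤ C₀·( r·D(r) + √(D(r)·F(r)) ); (iii) |H'(r) − ((m−1)/r)·H(r) − 2·E(r)| ≤ C₀·r·H(r); (iv) E(r)² ≤ G(r)·H(r); (v) F(r) ≤ C₀·( r·H(r) + r²·D(r) ). Define the frequency I(r) := r·D(r)/H(r). Then there exist constants C₁ > 0 and r₁ ∈ (0, r₀], depending only on m and C₀, such that I(s) ≤ C₁·(1 + I(t)) for all 0 < s ≤ t ≤ r₁. -/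
open Set

private lemma stay_above {v : ℝ → ℝ} {r₁ V : ℝ}
    (hdiff : ∀ r ∈ Ioc (0:ℝ) r₁, DifferentiableAt ℝ v r)
    (hderiv : ∀ r ∈ Ioc (0:ℝ) r₁, V ≤ v r → deriv v r < 0)
    {R : ℝ} (hR : R ∈ Ioc (0:ℝ) r₁) (hvR : V < v R) :
    ∀ ρ ∈ Ioc (0:ℝ) R, V < v ρ := by
  intro ρ hρ
  by_contra hcon
  push_neg at hcon
  have hρR : ρ < R := by
    rcases lt_or_eq_of_le hρ.2 with h | h
    · exact h
    · exact absurd hvR (by rw [h] at hcon; exact not_lt.2 hcon)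
  have hsub : Icc ρ R ⊆ Ioc (0:ℝ) r₁ :=
    fun x hx => ⟨lt_of_lt_of_le hρ.1 hx.1, le_trans hx.2 hR.2⟩
  have hcont : ContinuousOn v (Icc ρ R) :=
    fun x hx => ((hdiff x (hsub hx)).continuousAt).continuousWithinAt
  set S : Set ℝ := Icc ρ R ∩ v ⁻¹' (Iic V) with hSdef
  have hSclosed : IsClosed S :=
    hcont.preimage_isClosed_of_isClosed isClosed_Icc isClosed_Iic
  have hSne : S.Nonempty := ⟨ρ, ⟨le_refl _, hρR.le⟩, hcon⟩
  have hSbdd : BddAbove S := ⟨R, fun x hx => hx.1.2⟩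
  set σ := sSup S with hσdef
  have hσS : σ ∈ S := hSclosed.csSup_mem hSne hSbdd
  have hσR : σ ≤ R := hσS.1.2
  have habove : ∀ x ∈ Ioc σ R, V < v x := by
    intro x hx
    by_contra h
    push_neg at h
    have hxS : x ∈ S := ⟨⟨le_trans hσS.1.1 hx.1.le, hx.2⟩, h⟩
    exact absurd (le_csSup hSbdd hxS) (not_le.2 hx.1)
  have hanti : AntitoneOn v (Icc σ R) := by
    apply antitoneOn_of_deriv_nonpos (convex_Icc _ _)
      (hcont.mono (Icc_subset_Icc hσS.1.1 le_rfl))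
    · intro x hx
      rw [interior_Icc] at hx
      exact (hdiff x (hsub ⟨le_trans hσS.1.1 hx.1.le, hx.2.le⟩)).differentiableWithinAt
    · intro x hx
      rw [interior_Icc] at hx
      exact le_of_lt (hderiv x (hsub ⟨le_trans hσS.1.1 hx.1.le, hx.2.le⟩)
        (le_of_lt (habove x ⟨hx.1, hx.2.le⟩)))
  have : v R ≤ v σ := hanti ⟨le_rfl, hσR⟩ ⟨hσR, le_rfl⟩ hσR
  exact absurd hvR (not_lt.2 (le_trans this hσS.2))

private lemma key1_alg (m : ℕ) (hm2 : (2:ℝ) ≤ m) (C₀ V r Dr Hr Er Fr H' : ℝ)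
    (hC₀ : 0 < C₀) (hV1 : 1 ≤ V) (hVsq : C₀ ≤ V ^ 2)
    (hr : 0 < r) (hr3 : 3 * C₀ * r ≤ 1)
    (hD : 0 < Dr) (hH : 0 < Hr) (hF : 0 ≤ Fr)
    (f1 : ((m:ℝ) - 1) * Hr + 2 * r * Er - C₀ * r ^ 2 * Hr ≤ r * H')
    (f2 : Dr - C₀ * Fr ≤ Er)
    (f3 : Fr ≤ C₀ * (r * Hr + r ^ 2 * Dr))
    (f4 : V * (r * Hr) ≤ Fr) :
    2 * C₀ * r * (Hr * (r * Hr) - Fr * (1 * Hr + r * H')) ≤ -(Fr ^ 2) := by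
  have hrH : r * Hr ≤ Fr := le_trans (by nlinarith [mul_pos hr hH]) f4
  have hF2 : C₀ * (r * Hr) ^ 2 ≤ Fr ^ 2 := by nlinarith [mul_le_mul f4 f4 (by positivity) hF]
  have h9 : 9 * C₀ ^ 2 * r ^ 2 ≤ 1 := by nlinarith [mul_pos hC₀ hr]
  have step1 : 2 * C₀ * r * Fr * (((m:ℝ) - 1) * Hr + 2 * r * Er - C₀ * r ^ 2 * Hr)
      ≤ 2 * C₀ * r * Fr * (r * H') := by
    apply mul_le_mul_of_nonneg_left f1 (by positivity)
  have step2 : 4 * C₀ * r ^ 2 * Fr * (Dr - C₀ * Fr) ≤ 4 * C₀ * r ^ 2 * Fr * Er := by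
    apply mul_le_mul_of_nonneg_left f2 (by positivity)
  have step3 : 4 * Fr * Fr ≤ 4 * Fr * (C₀ * (r * Hr + r ^ 2 * Dr)) := by
    apply mul_le_mul_of_nonneg_left f3 (by positivity)
  have step4 : 0 ≤ ((m:ℝ) - 2) * (2 * C₀ * r * Fr * Hr) := by
    apply mul_nonneg (by linarith) (by positivity)
  have step6 : 2 * C₀ ^ 2 * r ^ 2 * Fr * (r * Hr) ≤ 2 * C₀ ^ 2 * r ^ 2 * Fr * Fr := by
    apply mul_le_mul_of_nonneg_left hrH (by positivity)
  nlinarith [step1, step2, step3, step4, step6, hF2, h9, sq_nonneg Fr, mul_pos hr hH]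

private lemma key2_alg (m : ℕ) (C₀ V r Dr Hr Er Fr Gr D' H' S : ℝ)
    (hC₀ : 0 < C₀)
    (hr : 0 < r)
    (hD : 0 < Dr) (hH : 0 < Hr)
    (a1 : 2 * r * Gr + ((m:ℝ) - 2) * Dr - C₀ * (r ^ 2 * Dr + r * S) ≤ r * D')
    (a2 : r * H' ≤ ((m:ℝ) - 1) * Hr + 2 * r * Er + C₀ * r ^ 2 * Hr)
    (a3 : S ≤ V * r * Dr)
    (h4 : Er ^ 2 ≤ Gr * Hr)
    (habs : |Dr - Er| ≤ C₀ * Fr)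
    (hFA : Fr ≤ V * (r * Hr)) :
    -(C₀ * (3 * V + 2) * r) * (r * Dr * Hr) ≤ (1 * Dr + r * D') * Hr - r * Dr * H' := by
  obtain ⟨hE1, hE2⟩ := abs_le.mp habs
  have a4 : -(C₀ * Fr * Dr) ≤ Gr * Hr - Dr * Er := by
    nlinarith [sq_nonneg (Er - Dr), mul_le_mul_of_nonneg_right hE2 hD.le]
  have s1 : Hr * (2 * r * Gr + ((m:ℝ) - 2) * Dr - C₀ * (r ^ 2 * Dr + r * S))
      ≤ Hr * (r * D') := mul_le_mul_of_nonneg_left a1 hH.le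
  have s2 : Dr * (r * H') ≤ Dr * (((m:ℝ) - 1) * Hr + 2 * r * Er + C₀ * r ^ 2 * Hr) :=
    mul_le_mul_of_nonneg_left a2 hD.le
  have s3 : Hr * (C₀ * (r * S)) ≤ Hr * (C₀ * (r * (V * r * Dr))) := by
    apply mul_le_mul_of_nonneg_left _ hH.le
    apply mul_le_mul_of_nonneg_left _ hC₀.le
    exact mul_le_mul_of_nonneg_left a3 hr.le
  have s4 : 2 * r * (-(C₀ * Fr * Dr)) ≤ 2 * r * (Gr * Hr - Dr * Er) :=
    mul_le_mul_of_nonneg_left a4 (by positivity)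
  have s5 : 2 * r * (C₀ * Fr * Dr) ≤ 2 * r * (C₀ * (V * (r * Hr)) * Dr) := by
    apply mul_le_mul_of_nonneg_left _ (by positivity : (0:ℝ) ≤ 2 * r)
    apply mul_le_mul_of_nonneg_right _ hD.le
    exact mul_le_mul_of_nonneg_left hFA hC₀.le
  nlinarith [s1, s2, s3, s4, s5]

set_option maxHeartbeats 1000000 in
/-- Almost monotonicity of the frequency function, real-variable form. -/
theorem frequency_almost_monotone (m : ℕ) (hm : 2 ≤ m) (C₀ r₀ : ℝ) (hC₀ : 0 < C₀)
    (hr₀ : 0 < r₀) (hr₀1 : r₀ ≤ 1) (D H E G F : ℝ → ℝ)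
    (hDdiff : ∀ r ∈ Ioc (0 : ℝ) r₀, DifferentiableAt ℝ D r)
    (hHdiff : ∀ r ∈ Ioc (0 : ℝ) r₀, DifferentiableAt ℝ H r)
    (hDpos : ∀ r ∈ Ioc (0 : ℝ) r₀, 0 < D r)
    (hHpos : ∀ r ∈ Ioc (0 : ℝ) r₀, 0 < H r)
    (hDmono : MonotoneOn D (Ioc (0 : ℝ) r₀))
    (hFdiff : ∀ r ∈ Ioc (0 : ℝ) r₀, DifferentiableAt ℝ F r)
    (hFnonneg : ∀ r ∈ Ioc (0 : ℝ) r₀, 0 ≤ F r)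
    (hF' : ∀ r ∈ Ioc (0 : ℝ) r₀, deriv F r = H r)
    (h1 : ∀ r ∈ Ioc (0 : ℝ) r₀, |D r - E r| ≤ C₀ * F r)
    (h2 : ∀ r ∈ Ioc (0 : ℝ) r₀,
      |deriv D r - 2 * G r - (((m : ℝ) - 2) / r) * D r| ≤
        C₀ * (r * D r + Real.sqrt (D r * F r)))
    (h3 : ∀ r ∈ Ioc (0 : ℝ) r₀,
      |deriv H r - (((m : ℝ) - 1) / r) * H r - 2 * E r| ≤ C₀ * r * H r)
    (h4 : ∀ r ∈ Ioc (0 : ℝ) r₀, (E r) ^ 2 ≤ G r * H r)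
    (h5 : ∀ r ∈ Ioc (0 : ℝ) r₀, F r ≤ C₀ * (r * H r + r ^ 2 * D r)) :
    ∃ C₁ : ℝ, 0 < C₁ ∧ ∃ r₁ : ℝ, 0 < r₁ ∧ r₁ ≤ r₀ ∧
      ∀ s t : ℝ, 0 < s → s ≤ t → t ≤ r₁ →
        s * D s / H s ≤ C₁ * (1 + t * D t / H t) := by
  have hm2 : (2:ℝ) ≤ (m:ℝ) := by exact_mod_cast hm
  set V : ℝ := 1 + Real.sqrt C₀ with hVdef
  have hV1 : 1 ≤ V := le_add_of_nonneg_right (Real.sqrt_nonneg _)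
  have hV0 : 0 < V := lt_of_lt_of_le one_pos hV1
  have hVsq : C₀ ≤ V ^ 2 := by
    have h := Real.sq_sqrt hC₀.le
    nlinarith [Real.sqrt_nonneg C₀]
  set C₂ : ℝ := C₀ * (3 * V + 2) with hC₂def
  have hC₂pos : 0 < C₂ := by positivity
  set r₁ : ℝ := min r₀ (1 / (3 * C₀)) with hr₁def
  have hr₁pos : 0 < r₁ := lt_min hr₀ (by positivity)
  have hr₁le : r₁ ≤ r₀ := min_le_left _ _
  have hr₁le1 : r₁ ≤ 1 := le_trans hr₁le hr₀1
  have hr₁C₀ : 3 * C₀ * r₁ ≤ 1 := by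
    have h := min_le_right r₀ (1 / (3 * C₀))
    rw [le_div_iff₀ (by positivity : (0:ℝ) < 3 * C₀)] at h
    linarith
  have hmem : ∀ r ∈ Ioc (0:ℝ) r₁, r ∈ Ioc (0:ℝ) r₀ :=
    fun r hr => ⟨hr.1, le_trans hr.2 hr₁le⟩
  -- derivative of v = F/(r H)
  have hvd : ∀ r ∈ Ioc (0:ℝ) r₀, HasDerivAt (fun x => F x / (x * H x))
      ((H r * (r * H r) - F r * (1 * H r + r * deriv H r)) / (r * H r) ^ 2) r := by
    intro r hr
    have hHr := (hHdiff r hr).hasDerivAt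
    have hFr := (hFdiff r hr).hasDerivAt
    rw [hF' r hr] at hFr
    have hrH : HasDerivAt (fun x => x * H x) (1 * H r + r * deriv H r) r :=
      (hasDerivAt_id' r).mul hHr
    exact hFr.div hrH (ne_of_gt (mul_pos hr.1 (hHpos r hr)))
  -- derivative of I = r D / H
  have hId : ∀ r ∈ Ioc (0:ℝ) r₀, HasDerivAt (fun x => x * D x / H x)
      (((1 * D r + r * deriv D r) * H r - r * D r * deriv H r) / (H r) ^ 2) r := by
    intro r hr
    exact ((hasDerivAt_id' r).mul (hDdiff r hr).hasDerivAt).div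
      (hHdiff r hr).hasDerivAt (ne_of_gt (hHpos r hr))
  -- unpacked first-variation bounds
  have e3l : ∀ r ∈ Ioc (0:ℝ) r₀,
      ((m:ℝ) - 1) * H r + 2 * r * E r - C₀ * r ^ 2 * H r ≤ r * deriv H r := by
    intro r hr
    have h := (abs_le.mp (h3 r hr)).1
    have hrne : r ≠ 0 := ne_of_gt hr.1
    have h' : (((m:ℝ) - 1) / r) * H r + 2 * E r - C₀ * r * H r ≤ deriv H r := by linarith
    have h2' := mul_le_mul_of_nonneg_left h' hr.1.le
    have hfs : r * ((((m:ℝ) - 1) / r) * H r + 2 * E r - C₀ * r * H r)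
        = ((m:ℝ) - 1) * H r + 2 * r * E r - C₀ * r ^ 2 * H r := by
      field_simp
    rw [hfs] at h2'
    exact h2'
  have e3u : ∀ r ∈ Ioc (0:ℝ) r₀,
      r * deriv H r ≤ ((m:ℝ) - 1) * H r + 2 * r * E r + C₀ * r ^ 2 * H r := by
    intro r hr
    have h := (abs_le.mp (h3 r hr)).2
    have hrne : r ≠ 0 := ne_of_gt hr.1
    have h' : deriv H r ≤ (((m:ℝ) - 1) / r) * H r + 2 * E r + C₀ * r * H r := by linarith
    have h2' := mul_le_mul_of_nonneg_left h' hr.1.le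
    have hfs : r * ((((m:ℝ) - 1) / r) * H r + 2 * E r + C₀ * r * H r)
        = ((m:ℝ) - 1) * H r + 2 * r * E r + C₀ * r ^ 2 * H r := by
      field_simp
    rw [hfs] at h2'
    exact h2'
  have e2l : ∀ r ∈ Ioc (0:ℝ) r₀,
      2 * r * G r + ((m:ℝ) - 2) * D r - C₀ * (r ^ 2 * D r + r * Real.sqrt (D r * F r))
        ≤ r * deriv D r := by
    intro r hr
    have h := (abs_le.mp (h2 r hr)).1
    have hrne : r ≠ 0 := ne_of_gt hr.1
    have h' : 2 * G r + (((m:ℝ) - 2) / r) * D r - C₀ * (r * D r + Real.sqrt (D r * F r))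
        ≤ deriv D r := by linarith
    have h2' := mul_le_mul_of_nonneg_left h' hr.1.le
    have hfs : r * (2 * G r + (((m:ℝ) - 2) / r) * D r - C₀ * (r * D r + Real.sqrt (D r * F r)))
        = 2 * r * G r + ((m:ℝ) - 2) * D r
          - C₀ * (r ^ 2 * D r + r * Real.sqrt (D r * F r)) := by
      field_simp
    rw [hfs] at h2'
    exact h2'
  -- Step A: key derivative inequality for v
  have key1 : ∀ r ∈ Ioc (0:ℝ) r₁, V ≤ F r / (r * H r) →
      2 * C₀ * r * deriv (fun x => F x / (x * H x)) r ≤ -((F r / (r * H r)) ^ 2) := by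
    intro r hr hge
    have hr0 := hmem r hr
    have hHr := hHpos r hr0
    have hDr := hDpos r hr0
    have hFr := hFnonneg r hr0
    have hP : (0:ℝ) < r * H r := mul_pos hr.1 hHr
    have f4 : V * (r * H r) ≤ F r := (le_div_iff₀ hP).mp hge
    have hr3 : 3 * C₀ * r ≤ 1 := le_trans (by nlinarith [hr.2]) hr₁C₀
    have hcore := key1_alg m hm2 C₀ V r (D r) (H r) (E r) (F r) (deriv H r)
      hC₀ hV1 hVsq hr.1 hr3 hDr hHr hFr (e3l r hr0)
      (by linarith [(abs_le.mp (h1 r hr0)).2]) (h5 r hr0) f4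
    rw [(hvd r hr0).deriv]
    have hP2 : (0:ℝ) < (r * H r) ^ 2 := pow_pos hP 2
    calc 2 * C₀ * r * ((H r * (r * H r) - F r * (1 * H r + r * deriv H r)) / (r * H r) ^ 2)
        = (2 * C₀ * r * (H r * (r * H r) - F r * (1 * H r + r * deriv H r))) / (r * H r) ^ 2 := by
          ring
      _ ≤ (-(F r ^ 2)) / (r * H r) ^ 2 := (div_le_div_iff_of_pos_right hP2).mpr hcore
      _ = -((F r / (r * H r)) ^ 2) := by rw [div_pow, neg_div]
  -- Step A conclusion: F ≤ V r H on (0, r₁]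
  have stepA : ∀ r ∈ Ioc (0:ℝ) r₁, F r ≤ V * (r * H r) := by
    intro R hR
    by_contra hcon
    push_neg at hcon
    have hR0 := hmem R hR
    have hPR : (0:ℝ) < R * H R := mul_pos hR.1 (hHpos R hR0)
    have hvR : V < F R / (R * H R) := (lt_div_iff₀ hPR).mpr hcon
    have hdiffv : ∀ r ∈ Ioc (0:ℝ) r₁, DifferentiableAt ℝ (fun x => F x / (x * H x)) r :=
      fun r hr => (hvd r (hmem r hr)).differentiableAt
    have hderivv : ∀ r ∈ Ioc (0:ℝ) r₁, V ≤ F r / (r * H r) →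
        deriv (fun x => F x / (x * H x)) r < 0 := by
      intro r hr hge
      have hk := key1 r hr hge
      nlinarith [mul_pos hC₀ hr.1, hge, hV1]
    have hvgt := stay_above hdiffv hderivv hR hvR
    set x₀ := R * Real.exp (-(4 * C₀ + 4)) with hx₀def
    have hexplt : Real.exp (-(4 * C₀ + 4)) < 1 := by
      rw [Real.exp_lt_one_iff]; linarith
    have hx₀pos : 0 < x₀ := mul_pos hR.1 (Real.exp_pos _)
    have hx₀lt : x₀ < R := by
      calc x₀ < R * 1 := by exact mul_lt_mul_of_pos_left hexplt hR.1
        _ = R := mul_one R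
    have hsub2 : Icc x₀ R ⊆ Ioc (0:ℝ) r₁ :=
      fun x hx => ⟨lt_of_lt_of_le hx₀pos hx.1, le_trans hx.2 hR.2⟩
    have hgd : ∀ x ∈ Icc x₀ R, HasDerivAt
        (fun y => (F y / (y * H y))⁻¹ - Real.log y / (2 * C₀))
        (-(deriv (fun y => F y / (y * H y)) x) / (F x / (x * H x)) ^ 2
          - x⁻¹ / (2 * C₀)) x := by
      intro x hx
      have hx1 := hsub2 hx
      have hx0 := hmem x hx1
      have hvx : V < F x / (x * H x) := hvgt x ⟨hx1.1, hx.2⟩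
      have hvne : F x / (x * H x) ≠ 0 := ne_of_gt (lt_trans hV0 hvx)
      have hdv : HasDerivAt (fun y => F y / (y * H y))
          (deriv (fun y => F y / (y * H y)) x) x :=
        ((hvd x hx0).differentiableAt).hasDerivAt
      exact (hdv.inv hvne).sub ((Real.hasDerivAt_log (ne_of_gt hx1.1)).div_const (2 * C₀))
    have hmono : MonotoneOn (fun y => (F y / (y * H y))⁻¹ - Real.log y / (2 * C₀))
        (Icc x₀ R) := by
      apply monotoneOn_of_deriv_nonneg (convex_Icc _ _)
      · exact fun x hx => (hgd x hx).differentiableAt.continuousAt.continuousWithinAt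
      · intro x hx
        rw [interior_Icc] at hx
        exact (hgd x ⟨hx.1.le, hx.2.le⟩).differentiableAt.differentiableWithinAt
      · intro x hx
        rw [interior_Icc] at hx
        have hxIcc : x ∈ Icc x₀ R := ⟨hx.1.le, hx.2.le⟩
        have hx1 := hsub2 hxIcc
        rw [(hgd x hxIcc).deriv]
        have hvx : V < F x / (x * H x) := hvgt x ⟨hx1.1, hxIcc.2⟩
        have hvpos : 0 < F x / (x * H x) := lt_trans hV0 hvx
        have hk := key1 x hx1 hvx.le
        have h1' : x⁻¹ / (2 * C₀) = 1 / (2 * C₀ * x) := by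
          field_simp
        have h2' : 1 / (2 * C₀ * x) ≤
            -(deriv (fun y => F y / (y * H y)) x) / (F x / (x * H x)) ^ 2 := by
          rw [div_le_div_iff₀ (mul_pos (mul_pos two_pos hC₀) hx1.1) (pow_pos hvpos 2)]
          nlinarith [hk]
        linarith [h2', h1'.ge, h1'.le]
    have hg := hmono (left_mem_Icc.mpr hx₀lt.le) (right_mem_Icc.mpr hx₀lt.le) hx₀lt.le
    simp only at hg
    have hlogx₀ : Real.log x₀ = Real.log R + (-(4 * C₀ + 4)) := by
      rw [hx₀def, Real.log_mul (ne_of_gt hR.1) (Real.exp_ne_zero _), Real.log_exp]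
    have hvx₀ : V < F x₀ / (x₀ * H x₀) := hvgt x₀ ⟨hx₀pos, hx₀lt.le⟩
    have hinvx₀ : 0 < (F x₀ / (x₀ * H x₀))⁻¹ := inv_pos.mpr (lt_trans hV0 hvx₀)
    have hinvR : (F R / (R * H R))⁻¹ ≤ 1 :=
      inv_le_one_of_one_le₀ (le_trans hV1 (le_of_lt hvR))
    have hquot : (2:ℝ) ≤ (4 * C₀ + 4) / (2 * C₀) := by
      rw [le_div_iff₀ (by positivity)]; linarith
    rw [hlogx₀] at hg
    have hsplit : (Real.log R + (-(4 * C₀ + 4))) / (2 * C₀)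
        = Real.log R / (2 * C₀) - (4 * C₀ + 4) / (2 * C₀) := by ring
    rw [hsplit] at hg
    linarith
  -- Step B
  have key2 : ∀ r ∈ Ioc (0:ℝ) r₁, H r ≤ r * D r →
      -(C₂ * r) * (r * D r / H r) ≤ deriv (fun x => x * D x / H x) r := by
    intro r hr hHD
    have hr0 := hmem r hr
    have hHr := hHpos r hr0
    have hDr := hDpos r hr0
    have hFr := hFnonneg r hr0
    have hFA := stepA r hr
    have hDF : D r * F r ≤ (V * r * D r) ^ 2 := by
      have p1 : D r * F r ≤ D r * (V * (r * H r)) := mul_le_mul_of_nonneg_left hFA hDr.le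
      have p2 : V * r * D r * H r ≤ V * r * D r * (r * D r) :=
        mul_le_mul_of_nonneg_left hHD (mul_nonneg (mul_nonneg hV0.le hr.1.le) hDr.le)
      nlinarith [sq_nonneg (r * D r), mul_pos hr.1 hDr, hV1]
    have a3 : Real.sqrt (D r * F r) ≤ V * r * D r := by
      calc Real.sqrt (D r * F r) ≤ Real.sqrt ((V * r * D r) ^ 2) := Real.sqrt_le_sqrt hDF
        _ = V * r * D r := Real.sqrt_sq (mul_nonneg (mul_nonneg hV0.le hr.1.le) hDr.le)
    have hcore := key2_alg m C₀ V r (D r) (H r) (E r) (F r) (G r)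
      (deriv D r) (deriv H r) (Real.sqrt (D r * F r))
      hC₀ hr.1 hDr hHr (e2l r hr0) (e3u r hr0) a3 (h4 r hr0) (h1 r hr0) hFA
    rw [(hId r hr0).deriv]
    rw [← hC₂def] at hcore
    have heq : -(C₂ * r) * (r * D r / H r) = (-(C₂ * r) * (r * D r * H r)) / (H r) ^ 2 := by
      field_simp
    rw [heq]
    exact (div_le_div_iff_of_pos_right (pow_pos hHr 2)).mpr hcore
  -- Step C: conclusion
  refine ⟨Real.exp (C₂ / 2), Real.exp_pos _, r₁, hr₁pos, hr₁le, ?_⟩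
  intro s t hs hst htr₁
  have hts : t ∈ Ioc (0:ℝ) r₁ := ⟨lt_of_lt_of_le hs hst, htr₁⟩
  have ht0 : t ∈ Ioc (0:ℝ) r₀ := hmem t hts
  have hs1 : s ∈ Ioc (0:ℝ) r₁ := ⟨hs, le_trans hst htr₁⟩
  have hs0 : s ∈ Ioc (0:ℝ) r₀ := hmem s hs1
  have hIt0 : 0 < t * D t / H t := div_pos (mul_pos hts.1 (hDpos t ht0)) (hHpos t ht0)
  have hIs0 : 0 < s * D s / H s := div_pos (mul_pos hs (hDpos s hs0)) (hHpos s hs0)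
  obtain ⟨τ, hτIcc, hτub, hbelow⟩ :
      ∃ τ, τ ∈ Icc s t ∧ (τ * D τ / H τ) ≤ max 1 (t * D t / H t) ∧
        ∀ ρ ∈ Ico s τ, 1 ≤ ρ * D ρ / H ρ := by
    by_cases hA : ∃ r ∈ Icc s t, r * D r / H r ≤ 1
    · set A : Set ℝ := Icc s t ∩ (fun r => r * D r / H r) ⁻¹' (Iic 1) with hAdef
      have hIcont : ContinuousOn (fun r => r * D r / H r) (Icc s t) := by
        intro x hx
        have hx0 : x ∈ Ioc (0:ℝ) r₀ :=
          ⟨lt_of_lt_of_le hs hx.1, le_trans hx.2 (le_trans htr₁ hr₁le)⟩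
        exact (hId x hx0).differentiableAt.continuousAt.continuousWithinAt
      have hAclosed : IsClosed A :=
        hIcont.preimage_isClosed_of_isClosed isClosed_Icc isClosed_Iic
      have hAne : A.Nonempty := by
        obtain ⟨r, hr, hr'⟩ := hA; exact ⟨r, hr, hr'⟩
      have hAbdd : BddBelow A := ⟨s, fun x hx => hx.1.1⟩
      have hτA : sInf A ∈ A := hAclosed.csInf_mem hAne hAbdd
      refine ⟨sInf A, hτA.1, le_trans hτA.2 (le_max_left _ _), ?_⟩
      intro ρ hρ
      by_contra hc
      push_neg at hc
      have hρA : ρ ∈ A := ⟨⟨hρ.1, le_trans hρ.2.le hτA.1.2⟩, hc.le⟩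
      exact absurd (csInf_le hAbdd hρA) (not_le.2 hρ.2)
    · push_neg at hA
      exact ⟨t, ⟨hst, le_rfl⟩, le_max_right _ _,
        fun ρ hρ => (hA ρ ⟨hρ.1, hρ.2.le⟩).le⟩
  have hsτ : s ≤ τ := hτIcc.1
  have hτr₁ : τ ∈ Ioc (0:ℝ) r₁ := ⟨lt_of_lt_of_le hs hsτ, le_trans hτIcc.2 htr₁⟩
  have hτ0 : τ ∈ Ioc (0:ℝ) r₀ := hmem τ hτr₁
  have hIτ0 : 0 < τ * D τ / H τ := div_pos (mul_pos hτr₁.1 (hDpos τ hτ0)) (hHpos τ hτ0)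
  set L : ℝ → ℝ := fun r => Real.log (r * D r / H r) + C₂ / 2 * (r * r) with hLdef
  have hLd : ∀ x ∈ Icc s τ, HasDerivAt L
      ((((1 * D x + x * deriv D x) * H x - x * D x * deriv H x) / (H x) ^ 2)
        / (x * D x / H x) + C₂ / 2 * (1 * x + x * 1)) x := by
    intro x hx
    have hx1 : x ∈ Ioc (0:ℝ) r₁ := ⟨lt_of_lt_of_le hs hx.1, le_trans hx.2 hτr₁.2⟩
    have hx0 := hmem x hx1
    have hIx : 0 < x * D x / H x := div_pos (mul_pos hx1.1 (hDpos x hx0)) (hHpos x hx0)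
    have hquad : HasDerivAt (fun y => C₂ / 2 * (y * y)) (C₂ / 2 * (1 * x + x * 1)) x :=
      ((hasDerivAt_id' x).mul (hasDerivAt_id' x)).const_mul (C₂ / 2)
    exact ((hId x hx0).log (ne_of_gt hIx)).add hquad
  have hmono : MonotoneOn L (Icc s τ) := by
    apply monotoneOn_of_deriv_nonneg (convex_Icc _ _)
    · exact fun x hx => (hLd x hx).differentiableAt.continuousAt.continuousWithinAt
    · intro x hx
      rw [interior_Icc] at hx
      exact (hLd x ⟨hx.1.le, hx.2.le⟩).differentiableAt.differentiableWithinAt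
    · intro x hx
      rw [interior_Icc] at hx
      have hxIcc : x ∈ Icc s τ := ⟨hx.1.le, hx.2.le⟩
      have hx1 : x ∈ Ioc (0:ℝ) r₁ := ⟨lt_of_lt_of_le hs hx.1.le, le_trans hx.2.le hτr₁.2⟩
      have hx0 := hmem x hx1
      have hHx := hHpos x hx0
      have hIx : 0 < x * D x / H x := div_pos (mul_pos hx1.1 (hDpos x hx0)) hHx
      have h1le : 1 ≤ x * D x / H x := hbelow x ⟨hx.1.le, hx.2⟩
      have hHD : H x ≤ x * D x := by
        rw [le_div_iff₀ hHx] at h1le; linarith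
      have hk := key2 x hx1 hHD
      rw [(hId x hx0).deriv] at hk
      rw [(hLd x hxIcc).deriv]
      have hdiv : -(C₂ * x) ≤
          (((1 * D x + x * deriv D x) * H x - x * D x * deriv H x) / (H x) ^ 2)
            / (x * D x / H x) := by
        rw [le_div_iff₀ hIx]
        exact hk
      have hquadeq : C₂ / 2 * (1 * x + x * 1) = C₂ * x := by ring
      linarith [hdiv, hquadeq.ge, hquadeq.le]
  have hLs : L s ≤ L τ := hmono (left_mem_Icc.mpr hsτ) (right_mem_Icc.mpr hsτ) hsτ
  have hττ : τ * τ ≤ 1 := by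
    have hτ1 : τ ≤ 1 := le_trans hτr₁.2 hr₁le1
    nlinarith [hτr₁.1]
  have hss : 0 ≤ s * s := mul_nonneg hs.le hs.le
  have hlog : Real.log (s * D s / H s) ≤ Real.log (τ * D τ / H τ) + C₂ / 2 := by
    simp only [hLdef] at hLs
    nlinarith [hLs, hC₂pos]
  calc s * D s / H s = Real.exp (Real.log (s * D s / H s)) := (Real.exp_log hIs0).symm
    _ ≤ Real.exp (Real.log (τ * D τ / H τ) + C₂ / 2) := Real.exp_le_exp.mpr hlog
    _ = (τ * D τ / H τ) * Real.exp (C₂ / 2) := by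
        rw [Real.exp_add, Real.exp_log hIτ0]
    _ ≤ max 1 (t * D t / H t) * Real.exp (C₂ / 2) :=
        mul_le_mul_of_nonneg_right hτub (Real.exp_pos _).le
    _ ≤ (1 + t * D t / H t) * Real.exp (C₂ / 2) := by
        apply mul_le_mul_of_nonneg_right _ (Real.exp_pos _).le
        exact max_le (by linarith) (by linarith)
    _ = Real.exp (C₂ / 2) * (1 + t * D t / H t) := mul_comm _ _
end

section
/- Improved almost monotonicity of the frequency, real-variable form: let m ≥ 2 be an integer, C₀ > 0 and r₀ ∈ (0, 1]. Let D, H, E, G, F : (0, r₀] → ℝ be functions such that D and H are differentiable and strictly positive, D is nondecreasing, F is differentiable with F ≥ 0 and F' = H, and for every r ∈ (0, r₀]: (i) |D(r) − E(r)| ≤ C₀·F(r); (ii) |D'(r) − 2·G(r) − ((m−2)/r)·D(r)| ≤ C₀·( r·D(r) + √(D(r)·F(r)) ); (iii) |H'(r) − ((m−1)/r)·H(r) − 2·E(r)| ≤ C₀·r·H(r); (iv) E(r)² ≤ G(r)·H(r); and the strengthened Poincaré-type bound (v') F(r) ≤ C₀·r²·D(r). Set I(r) := r·D(r)/H(r).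 Then there exist r₁ ∈ (0, r₀], depending only on m and C₀, and λ > 0, depending only on m, C₀ and the value I(r₁), such that the function r ↦ e^{λ·r}·I(r) is nondecreasing on (0, r₁]; in particular the limit of I(r) as r → 0⁺ exists. -/
open Set Filter
open scoped Topology

set_option maxHeartbeats 1000000 in
/-- Improved almost monotonicity of the frequency function, real-variable form. -/
theorem frequency_improved_almost_monotone (m : ℕ) (hm : 2 ≤ m) (C₀ r₀ : ℝ) (hC₀ : 0 < C₀)
    (hr₀ : 0 < r₀) (hr₀1 : r₀ ≤ 1) (D H E G F : ℝ → ℝ)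
    (hDdiff : ∀ r ∈ Ioc (0 : ℝ) r₀, DifferentiableAt ℝ D r)
    (hHdiff : ∀ r ∈ Ioc (0 : ℝ) r₀, DifferentiableAt ℝ H r)
    (hDpos : ∀ r ∈ Ioc (0 : ℝ) r₀, 0 < D r)
    (hHpos : ∀ r ∈ Ioc (0 : ℝ) r₀, 0 < H r)
    (hDmono : MonotoneOn D (Ioc (0 : ℝ) r₀))
    (hFdiff : ∀ r ∈ Ioc (0 : ℝ) r₀, DifferentiableAt ℝ F r)
    (hFnonneg : ∀ r ∈ Ioc (0 : ℝ) r₀, 0 ≤ F r)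
    (hF' : ∀ r ∈ Ioc (0 : ℝ) r₀, deriv F r = H r)
    (h1 : ∀ r ∈ Ioc (0 : ℝ) r₀, |D r - E r| ≤ C₀ * F r)
    (h2 : ∀ r ∈ Ioc (0 : ℝ) r₀,
      |deriv D r - 2 * G r - (((m : ℝ) - 2) / r) * D r| ≤
        C₀ * (r * D r + Real.sqrt (D r * F r)))
    (h3 : ∀ r ∈ Ioc (0 : ℝ) r₀,
      |deriv H r - (((m : ℝ) - 1) / r) * H r - 2 * E r| ≤ C₀ * r * H r)
    (h4 : ∀ r ∈ Ioc (0 : ℝ) r₀, (E r) ^ 2 ≤ G r * H r)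
    (h5' : ∀ r ∈ Ioc (0 : ℝ) r₀, F r ≤ C₀ * r ^ 2 * D r) :
    ∃ r₁ : ℝ, 0 < r₁ ∧ r₁ ≤ r₀ ∧ ∃ lam : ℝ, 0 < lam ∧
      MonotoneOn (fun r : ℝ => Real.exp (lam * r) * (r * D r / H r)) (Ioc (0 : ℝ) r₁) ∧
      ∃ I₀ : ℝ, Tendsto (fun r : ℝ => r * D r / H r) (𝓝[>] (0 : ℝ)) (𝓝 I₀) := by
  have hm2 : (2 : ℝ) ≤ (m : ℝ) := by exact_mod_cast hm
  set r₁ : ℝ := min r₀ (1 / (2 * C₀)) with hr₁def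
  have hr₁pos : 0 < r₁ := lt_min hr₀ (by positivity)
  have hr₁le : r₁ ≤ r₀ := min_le_left _ _
  have hr₁1 : r₁ ≤ 1 := hr₁le.trans hr₀1
  have hsub : Ioc (0 : ℝ) r₁ ⊆ Ioc (0 : ℝ) r₀ := Ioc_subset_Ioc_right hr₁le
  have hCr : ∀ r ∈ Ioc (0 : ℝ) r₁, C₀ * r ≤ 1 / 2 := by
    intro r hr
    have h : r ≤ 1 / (2 * C₀) := hr.2.trans (min_le_right _ _)
    have := mul_le_mul_of_nonneg_left h hC₀.le
    calc C₀ * r ≤ C₀ * (1 / (2 * C₀)) := this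
      _ = 1 / 2 := by field_simp
  -- basic consequences of (i) and (v')
  have hCF : ∀ r ∈ Ioc (0 : ℝ) r₁, C₀ * F r ≤ (1 / 4) * D r := by
    intro r hr
    have h5 := h5' r (hsub hr)
    have hd := hDpos r (hsub hr)
    have hcr := hCr r hr
    have h0 : 0 ≤ C₀ * r := mul_nonneg hC₀.le hr.1.le
    have ha : (C₀ * r) ^ 2 ≤ 1 / 4 := by nlinarith
    have hb : (C₀ * r) ^ 2 * D r ≤ (1 / 4) * D r := mul_le_mul_of_nonneg_right ha hd.le
    have hc : C₀ * F r ≤ (C₀ * r) ^ 2 * D r := by nlinarith [mul_le_mul_of_nonneg_left h5 hC₀.le]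
    linarith
  have hElb : ∀ r ∈ Ioc (0 : ℝ) r₁, (3 / 4) * D r ≤ E r := by
    intro r hr
    have := (abs_le.mp (h1 r (hsub hr))).2
    have := hCF r hr
    linarith
  have hEub : ∀ r ∈ Ioc (0 : ℝ) r₁, E r ≤ (5 / 4) * D r := by
    intro r hr
    have := (abs_le.mp (h1 r (hsub hr))).1
    have := hCF r hr
    linarith
  -- Step B : comparison of H at different radii
  have hHcomp : ∀ s ∈ Ioc (0 : ℝ) r₁, ∀ r ∈ Ioc (0 : ℝ) r₁, s ≤ r →
      H s ≤ Real.exp (C₀ / 2) * H r := by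
    intro s hs r hr hsr
    have hs0 : (0 : ℝ) < s := hs.1
    have hr0 : (0 : ℝ) < r := hr.1
    set L : ℝ → ℝ := fun t => Real.log (H t) - ((m : ℝ) - 1) * Real.log t + C₀ * t ^ 2 / 2
      with hLdef
    have hmemIcc : ∀ t ∈ Icc s r, t ∈ Ioc (0 : ℝ) r₀ := fun t ht =>
      ⟨hs0.trans_le ht.1, ht.2.trans (hr.2.trans hr₁le)⟩
    have hLder : ∀ t ∈ Icc s r, HasDerivAt L
        (deriv H t / H t - ((m : ℝ) - 1) * t⁻¹ + C₀ * t) t := by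
      intro t ht
      have ht' := hmemIcc t ht
      have ht0 : (0 : ℝ) < t := ht'.1
      have hH := (hHdiff t ht').hasDerivAt
      have hlogH : HasDerivAt (fun u => Real.log (H u)) (deriv H t / H t) t :=
        hH.log (ne_of_gt (hHpos t ht'))
      have hlogt : HasDerivAt (fun u : ℝ => ((m : ℝ) - 1) * Real.log u)
          (((m : ℝ) - 1) * t⁻¹) t := (Real.hasDerivAt_log (ne_of_gt ht0)).const_mul _
      have hpow : HasDerivAt (fun u : ℝ => C₀ * u ^ 2 / 2) (C₀ * t) t := by
        have := ((hasDerivAt_pow 2 t).const_mul C₀).div_const 2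
        refine this.congr_deriv ?_
        norm_num; ring
      exact (hlogH.sub hlogt).add hpow
    have hLmono : MonotoneOn L (Icc s r) := by
      apply monotoneOn_of_deriv_nonneg (convex_Icc s r)
      · exact fun t ht => (hLder t ht).differentiableAt.continuousAt.continuousWithinAt
      · rw [interior_Icc]
        exact fun t ht => ((hLder t (Ioo_subset_Icc_self ht)).differentiableAt).differentiableWithinAt
      · rw [interior_Icc]
        intro t ht
        have ht1 : t ∈ Icc s r := Ioo_subset_Icc_self ht
        have ht' := hmemIcc t ht1
        have ht'' : t ∈ Ioc (0 : ℝ) r₁ := ⟨ht'.1, ht1.2.trans hr.2⟩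
        rw [(hLder t ht1).deriv]
        have ht0 : (0 : ℝ) < t := ht'.1
        have hh := hHpos t ht'
        have h3t := (abs_le.mp (h3 t ht')).1
        have hE := hElb t ht''
        have hd := hDpos t ht'
        have hnum : 0 ≤ deriv H t - (((m : ℝ) - 1) / t) * H t + C₀ * t * H t := by
          nlinarith
        have heq : (deriv H t - (((m : ℝ) - 1) / t) * H t + C₀ * t * H t) / H t
            = deriv H t / H t - ((m : ℝ) - 1) * t⁻¹ + C₀ * t := by
          field_simp
        have := div_nonneg hnum hh.le
        rw [heq] at this
        exact this
    have hLsr : L s ≤ L r := hLmono (left_mem_Icc.mpr hsr) (right_mem_Icc.mpr hsr) hsr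
    have hHs := hHpos s (hsub hs)
    have hHr := hHpos r (hsub hr)
    have hlog : Real.log (H s) ≤ Real.log (H r) + C₀ / 2 := by
      have hls : Real.log s ≤ Real.log r := Real.log_le_log hs0 hsr
      have hmul : ((m : ℝ) - 1) * (Real.log s - Real.log r) ≤ 0 :=
        mul_nonpos_of_nonneg_of_nonpos (by linarith) (by linarith)
      have hr1 : r ≤ 1 := hr.2.trans hr₁1
      have hsq : r ^ 2 - s ^ 2 ≤ 1 := by nlinarith
      have hsq' : C₀ * r ^ 2 / 2 - C₀ * s ^ 2 / 2 ≤ C₀ / 2 := by nlinarith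
      simp only [hLdef] at hLsr
      linarith
    calc H s = Real.exp (Real.log (H s)) := (Real.exp_log hHs).symm
      _ ≤ Real.exp (Real.log (H r) + C₀ / 2) := Real.exp_le_exp.mpr hlog
      _ = Real.exp (C₀ / 2) * H r := by rw [Real.exp_add, Real.exp_log hHr]; ring
  -- Step C : F r ≤ e^{C₀/2} r H r
  have hFH : ∀ r ∈ Ioc (0 : ℝ) r₁, F r ≤ Real.exp (C₀ / 2) * r * H r := by
    intro r hr
    have hr0 : (0 : ℝ) < r := hr.1
    set c : ℝ := Real.exp (C₀ / 2) * H r with hcdef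
    have hc0 : 0 < c := by
      have := hHpos r (hsub hr); positivity
    have hstep : ∀ ρ ∈ Ioo (0 : ℝ) r, F r ≤ c * r + C₀ * D r * ρ := by
      intro ρ hρ
      have hρ0 : (0 : ℝ) < ρ := hρ.1
      have hmemIcc : ∀ t ∈ Icc ρ r, t ∈ Ioc (0 : ℝ) r₀ := fun t ht =>
        ⟨hρ0.trans_le ht.1, ht.2.trans (hr.2.trans hr₁le)⟩
      have hgder : ∀ t ∈ Icc ρ r, HasDerivAt (fun u => F u - c * u) (H t - c) t := by
        intro t ht
        have ht' := hmemIcc t ht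
        have hF := (hFdiff t ht').hasDerivAt
        rw [hF' t ht'] at hF
        exact (hF.sub ((hasDerivAt_id t).const_mul c)).congr_deriv (by simp)
      have hganti : AntitoneOn (fun u => F u - c * u) (Icc ρ r) := by
        apply antitoneOn_of_deriv_nonpos (convex_Icc ρ r)
        · exact fun t ht => (hgder t ht).differentiableAt.continuousAt.continuousWithinAt
        · rw [interior_Icc]
          exact fun t ht =>
            ((hgder t (Ioo_subset_Icc_self ht)).differentiableAt).differentiableWithinAt
        · rw [interior_Icc]
          intro t ht
          have ht1 : t ∈ Icc ρ r := Ioo_subset_Icc_self ht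
          rw [(hgder t ht1).deriv]
          have ht'' : t ∈ Ioc (0 : ℝ) r₁ := ⟨hρ0.trans ht.1, ht1.2.trans hr.2⟩
          have := hHcomp t ht'' r hr ht1.2
          simp only [hcdef]
          linarith
      have h1' := hganti (left_mem_Icc.mpr hρ.2.le) (right_mem_Icc.mpr hρ.2.le) hρ.2.le
      -- F r - c r ≤ F ρ - c ρ
      have hFρ : F ρ ≤ C₀ * ρ * D r := by
        have hρ' : ρ ∈ Ioc (0 : ℝ) r₀ := ⟨hρ0, hρ.2.le.trans (hr.2.trans hr₁le)⟩
        have h5 := h5' ρ hρ'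
        have hmono := hDmono hρ' (hsub hr) hρ.2.le
        have hρ1 : ρ ≤ 1 := (hρ.2.le.trans hr.2).trans hr₁1
        have hd := hDpos ρ hρ'
        have hdr := hDpos r (hsub hr)
        have e1 : C₀ * ρ ^ 2 * D ρ ≤ C₀ * ρ ^ 2 * D r :=
          mul_le_mul_of_nonneg_left hmono (by positivity)
        have e2 : 0 ≤ C₀ * ρ * D r * (1 - ρ) :=
          mul_nonneg (mul_nonneg (mul_nonneg hC₀.le hρ0.le) hdr.le) (by linarith)
        nlinarith
      have : 0 ≤ c * ρ := by positivity
      simp only at h1'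
      linarith
    -- pass to the limit ρ → 0⁺
    have htend : Tendsto (fun ρ : ℝ => c * r + C₀ * D r * ρ) (𝓝[>] (0 : ℝ))
        (𝓝 (c * r + C₀ * D r * 0)) := by
      apply Tendsto.mono_left _ nhdsWithin_le_nhds
      exact (continuous_const.add (continuous_const.mul continuous_id)).tendsto 0
    have hle : F r ≤ c * r + C₀ * D r * 0 := by
      apply ge_of_tendsto htend
      filter_upwards [Ioo_mem_nhdsGT_of_mem (by constructor <;> [exact le_refl 0; exact hr0])]
        with ρ hρ
      exact hstep ρ hρ
    calc F r ≤ c * r + C₀ * D r * 0 := hle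
      _ = Real.exp (C₀ / 2) * r * H r := by rw [hcdef]; ring
  -- the constant
  set lam : ℝ := C₀ * (2 + Real.sqrt C₀ + (5 / 2) * Real.exp (C₀ / 2)) with hlamdef
  have hlam : 0 < lam := by positivity
  -- derivative of J
  have hJder : ∀ t ∈ Ioc (0 : ℝ) r₁, HasDerivAt
      (fun r : ℝ => Real.exp (lam * r) * (r * D r / H r))
      (lam * Real.exp (lam * t) * (t * D t / H t) +
        Real.exp (lam * t) *
          (((D t + t * deriv D t) * H t - t * D t * deriv H t) / (H t) ^ 2)) t := by
    intro t ht
    have ht' := hsub ht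
    have hne : H t ≠ 0 := ne_of_gt (hHpos t ht')
    have hexp : HasDerivAt (fun u : ℝ => Real.exp (lam * u)) (lam * Real.exp (lam * t)) t := by
      have := (Real.hasDerivAt_exp (lam * t)).comp t ((hasDerivAt_id t).const_mul lam)
      refine this.congr_deriv ?_
      simp [mul_comm]
    have hnum : HasDerivAt (fun u : ℝ => u * D u) (D t + t * deriv D t) t := by
      have h := (hasDerivAt_id t).mul (hDdiff t ht').hasDerivAt
      simp only [id_eq, one_mul] at h
      exact h
    have hq : HasDerivAt (fun u : ℝ => u * D u / H u)
        (((D t + t * deriv D t) * H t - t * D t * deriv H t) / (H t) ^ 2) t :=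
      hnum.div (hHdiff t ht').hasDerivAt hne
    have := hexp.mul hq
    exact this
  -- key positivity of the derivative
  have hkey : ∀ t ∈ Ioc (0 : ℝ) r₁,
      0 ≤ lam * (t * D t * H t) + (D t + t * deriv D t) * H t - t * D t * deriv H t := by
    intro t ht
    have ht' := hsub ht
    have ht0 : (0 : ℝ) < t := ht.1
    have ht1 : t ≤ 1 := ht.2.trans hr₁1
    have hd := hDpos t ht'
    have hh := hHpos t ht'
    have hf0 := hFnonneg t ht'
    have hEl := hElb t ht
    have hEu := hEub t ht
    have hCFt := hCF t ht
    have hFHt := hFH t ht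
    have hE0 : 0 ≤ E t := by linarith
    -- sqrt bound
    have hs : Real.sqrt (D t * F t) ≤ Real.sqrt C₀ * (t * D t) := by
      have h5 := h5' t ht'
      have : D t * F t ≤ C₀ * (t * D t) ^ 2 := by nlinarith
      calc Real.sqrt (D t * F t) ≤ Real.sqrt (C₀ * (t * D t) ^ 2) := Real.sqrt_le_sqrt this
        _ = Real.sqrt C₀ * (t * D t) := by
            rw [Real.sqrt_mul hC₀.le, Real.sqrt_sq (by positivity)]
    set sq : ℝ := Real.sqrt (D t * F t) with hsqdef
    have hsq0 : 0 ≤ sq := Real.sqrt_nonneg _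
    -- multiplied first-variation bounds
    have h2t' : 2 * G t * t + ((m : ℝ) - 2) * D t - C₀ * (t * D t + sq) * t ≤ deriv D t * t := by
      have habs := (abs_le.mp (h2 t ht')).1
      have e1 : (((m : ℝ) - 2) / t) * D t = (((m : ℝ) - 2) * D t) / t := by ring
      have lb : 2 * G t + (((m : ℝ) - 2) * D t) / t - C₀ * (t * D t + sq) ≤ deriv D t := by
        rw [← e1]; simp only [hsqdef]; linarith
      have lb2 := mul_le_mul_of_nonneg_right lb ht0.le
      have e2 : (2 * G t + (((m : ℝ) - 2) * D t) / t - C₀ * (t * D t + sq)) * t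
          = 2 * G t * t + ((m : ℝ) - 2) * D t - C₀ * (t * D t + sq) * t := by
        field_simp
      linarith
    have h3t' : deriv H t * t ≤ ((m : ℝ) - 1) * H t + 2 * E t * t + C₀ * t * H t * t := by
      have habs := (abs_le.mp (h3 t ht')).2
      have e1 : (((m : ℝ) - 1) / t) * H t = (((m : ℝ) - 1) * H t) / t := by ring
      have ub : deriv H t ≤ (((m : ℝ) - 1) * H t) / t + 2 * E t + C₀ * t * H t := by
        rw [← e1]; linarith
      have ub2 := mul_le_mul_of_nonneg_right ub ht0.le
      have e2 : ((((m : ℝ) - 1) * H t) / t + 2 * E t + C₀ * t * H t) * t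
          = ((m : ℝ) - 1) * H t + 2 * E t * t + C₀ * t * H t * t := by
        field_simp
      linarith
    have P1 := mul_le_mul_of_nonneg_right h2t' hh.le
    have P2 := mul_le_mul_of_nonneg_right h3t' hd.le
    have b3 := mul_le_mul_of_nonneg_left (h4 t ht') ht0.le
    -- E (E - D) ≥ -(5/4) D C₀ F
    have q1 : -(C₀ * F t) ≤ E t - D t := by
      have := (abs_le.mp (h1 t ht')).2
      linarith
    have q2 : E t * (-(C₀ * F t)) ≤ E t * (E t - D t) := mul_le_mul_of_nonneg_left q1 hE0
    have q3 : -((5 / 4) * D t * (C₀ * F t)) ≤ E t * (-(C₀ * F t)) := by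
      have hCf0 : 0 ≤ C₀ * F t := by positivity
      nlinarith
    have q4 : -((5 / 4) * D t * (C₀ * F t)) ≤ E t * (E t - D t) := le_trans q3 q2
    have q4t := mul_le_mul_of_nonneg_left q4 ht0.le
    -- F bound multiplied
    have b4' : (5 / 4) * C₀ * (t * D t) * F t
        ≤ (5 / 4) * C₀ * (t * D t) * (Real.exp (C₀ / 2) * t * H t) := by
      apply mul_le_mul_of_nonneg_left hFHt
      positivity
    -- sqrt term multiplied
    have b5 : C₀ * t * H t * sq ≤ C₀ * t * H t * (Real.sqrt C₀ * (t * D t)) := by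
      apply mul_le_mul_of_nonneg_left hs
      positivity
    -- t^2 ≤ t lemmas
    have hts : t ^ 2 * (D t * H t) ≤ t * (D t * H t) := by
      have h0 : 0 ≤ (1 - t) * t * (D t * H t) :=
        mul_nonneg (mul_nonneg (by linarith) ht0.le) (mul_nonneg hd.le hh.le)
      nlinarith [h0]
    have b6a : C₀ * (t ^ 2 * (D t * H t)) ≤ C₀ * (t * (D t * H t)) :=
      mul_le_mul_of_nonneg_left hts hC₀.le
    have b6b : C₀ * Real.sqrt C₀ * (t ^ 2 * (D t * H t))
        ≤ C₀ * Real.sqrt C₀ * (t * (D t * H t)) :=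
      mul_le_mul_of_nonneg_left hts (by positivity)
    have b6c : C₀ * Real.exp (C₀ / 2) * (t ^ 2 * (D t * H t))
        ≤ C₀ * Real.exp (C₀ / 2) * (t * (D t * H t)) :=
      mul_le_mul_of_nonneg_left hts (by positivity)
    simp only [hlamdef]
    linarith [P1, P2, b3, q4t, b4', b5, b6a, b6b, b6c]
  -- monotonicity of J
  have hJmono : MonotoneOn (fun r : ℝ => Real.exp (lam * r) * (r * D r / H r))
      (Ioc (0 : ℝ) r₁) := by
    intro x hx y hy hxy
    rcases eq_or_lt_of_le hxy with rfl | hlt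
    · exact le_refl _
    have hIccsub : Icc x y ⊆ Ioc (0 : ℝ) r₁ := fun t ht => ⟨hx.1.trans_le ht.1, ht.2.trans hy.2⟩
    have := monotoneOn_of_deriv_nonneg (convex_Icc x y)
      (f := fun r : ℝ => Real.exp (lam * r) * (r * D r / H r))
      (fun t ht => (hJder t (hIccsub ht)).differentiableAt.continuousAt.continuousWithinAt)
      (by
        rw [interior_Icc]
        exact fun t ht =>
          ((hJder t (hIccsub (Ioo_subset_Icc_self ht))).differentiableAt).differentiableWithinAt)
      (by
        rw [interior_Icc]
        intro t ht
        have ht1 : t ∈ Ioc (0 : ℝ) r₁ := hIccsub (Ioo_subset_Icc_self ht)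
        rw [(hJder t ht1).deriv]
        have hh := hHpos t (hsub ht1)
        have key := hkey t ht1
        have hdiv : 0 ≤ (lam * (t * D t * H t) + (D t + t * deriv D t) * H t
            - t * D t * deriv H t) / (H t) ^ 2 := div_nonneg key (by positivity)
        have heq : (lam * (t * D t * H t) + (D t + t * deriv D t) * H t
            - t * D t * deriv H t) / (H t) ^ 2
            = lam * (t * D t / H t) +
              ((D t + t * deriv D t) * H t - t * D t * deriv H t) / (H t) ^ 2 := by
          field_simp
          ring
        rw [heq] at hdiv
        have hexp2 : 0 < Real.exp (lam * t) := Real.exp_pos _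
        nlinarith)
    exact this (left_mem_Icc.mpr hxy) (right_mem_Icc.mpr hxy) hxy
  refine ⟨r₁, hr₁pos, hr₁le, lam, hlam, hJmono, ?_⟩
  -- existence of the limit
  have hJmono' : MonotoneOn (fun r : ℝ => Real.exp (lam * r) * (r * D r / H r))
      (Ioo (0 : ℝ) r₁) := hJmono.mono Ioo_subset_Ioc_self
  have hne : (Ioo (0 : ℝ) r₁).Nonempty := ⟨r₁ / 2, by constructor <;> linarith⟩
  have hbdd : BddBelow ((fun r : ℝ => Real.exp (lam * r) * (r * D r / H r)) '' Ioo (0 : ℝ) r₁) := by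
    refine ⟨0, ?_⟩
    rintro y ⟨x, hx, rfl⟩
    have hx' : x ∈ Ioc (0 : ℝ) r₀ := hsub ⟨hx.1, hx.2.le⟩
    have := hDpos x hx'
    have := hHpos x hx'
    have hx0 := hx.1
    positivity
  have htendJ := MonotoneOn.tendsto_nhdsWithin_Ioo_right hne hJmono' hbdd
  set L₀ : ℝ := sInf ((fun r : ℝ => Real.exp (lam * r) * (r * D r / H r)) '' Ioo (0 : ℝ) r₁)
  have hexp : Tendsto (fun r : ℝ => Real.exp (-(lam * r))) (𝓝[>] (0 : ℝ))
      (𝓝 (Real.exp (-(lam * 0)))) := by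
    apply Tendsto.mono_left _ nhdsWithin_le_nhds
    exact (Real.continuous_exp.comp (continuous_const.mul continuous_id).neg).tendsto 0
  have hmul := hexp.mul htendJ
  refine ⟨Real.exp (-(lam * 0)) * L₀, ?_⟩
  apply hmul.congr
  intro r
  rw [← mul_assoc, ← Real.exp_add]
  simp
end
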